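/- Let n, b be positive integers, let g : 𝔽₂^[b] → 𝔽₂ be a gadget, let δ ≥ 0 satisfy |ĝ(S)| ≤ δ for all S ⊆ [b], and set E = (1+2δ)^n − 1. Let A ⊆ 𝔽₂^{[n]×[b]} be a nonempty safe affine subspace and let z ∈ 𝔽₂^[n]. Then the fraction of points of A mapped to z satisfies |#(A ∩ G⁻¹(z))/#A − 2^{−n}| ≤ E · 2^{−n} (as real numbers). -/

import Mathlib

open Finset

noncomputable section

abbrev F2 : Type := ZMod 2

/-- Restriction of `x` to block `i`. -/
def blk {ι : Type*} {b : ℕ} (x : (ι × Fin b) → F2) (i : ι) : Fin b → F2 := fun j => x (i, j)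

/-- The lifted gadget map `G(x)_i = g(x(i))`. -/
def liftG {n b : ℕ} (g : (Fin b → F2) → F2) (x : (Fin n × Fin b) → F2) : Fin n → F2 :=
  fun i => g (blk x i)

/-- Fourier coefficient of `h : 𝔽₂^J → 𝔽₂` at `T ⊆ J`. -/
def hatFC {J : Type*} [Fintype J] [DecidableEq J] (h : (J → F2) → F2) (T : Finset J) : ℝ :=
  ((2 : ℝ) ^ (Fintype.card J))⁻¹ *
    ∑ x : J → F2, (-1 : ℝ) ^ ((h x).val + ∑ j ∈ T, (x j).val)

/-- A set of vectors of the lifted space (blocks indexed by `ι`) is safe if any `k`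
linearly independent vectors in its span have supports meeting at least `k` blocks. -/
def IsSafeSet {ι : Type*} {b : ℕ} (Vs : Set ((ι × Fin b) → F2)) : Prop :=
  ∀ (k : ℕ) (w : Fin k → ((ι × Fin b) → F2)),
    (∀ m, w m ∈ Submodule.span F2 Vs) → LinearIndependent F2 w →
    k ≤ ({i : ι | ∃ m j, w m (i, j) ≠ 0} : Set ι).ncard

/-- The annihilator `L(A)` of an affine subspace: all linear forms vanishing on its
direction. -/
def annih {ι : Type*} [Fintype ι] {b : ℕ}
    (A : AffineSubspace F2 ((ι × Fin b) → F2)) : Set ((ι × Fin b) → F2) :=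
  {l | ∀ w ∈ A.direction, ∑ p : ι × Fin b, l p * w p = 0}

/-- A (nonempty) affine subspace is safe if its annihilator is safe. -/
def IsSafeAffine {ι : Type*} [Fintype ι] {b : ℕ}
    (A : AffineSubspace F2 ((ι × Fin b) → F2)) : Prop :=
  IsSafeSet (annih A)

/-- Codimension of an affine subspace of the lifted space. -/
def codim {ι : Type*} [Fintype ι] {b : ℕ}
    (A : AffineSubspace F2 ((ι × Fin b) → F2)) : ℕ :=
  Fintype.card ι * b - Module.finrank F2 A.direction

/-- Standard basis vector at coordinate `p`. -/
def stdv {ι : Type*} [DecidableEq ι] {b : ℕ} (p : ι × Fin b) : (ι × Fin b) → F2 :=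
  fun q => if q = p then 1 else 0

/-- A set of blocks `S` is acceptable for a subspace `W` if one can pick one coordinate
in each block of `S` so that no nonzero 𝔽₂-linear combination of the corresponding
standard basis vectors lies in `W`. -/
def AcceptableFor {ι : Type*} [DecidableEq ι] {b : ℕ}
    (W : Submodule F2 ((ι × Fin b) → F2)) (S : Finset ι) : Prop :=
  ∃ c : ι → Fin b, ∀ T ⊆ S, T.Nonempty → (∑ s ∈ T, stdv (s, c s)) ∉ W

/-- `âcl(A)`: the maximum size of a set of blocks acceptable for the direction of `A`. -/
def acl {ι : Type*} [Fintype ι] [DecidableEq ι] {b : ℕ}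
    (A : AffineSubspace F2 ((ι × Fin b) → F2)) : ℕ :=
  sSup {k | ∃ S : Finset ι, S.card = k ∧ AcceptableFor A.direction S}

/-- `v[∖T]`: restriction of `v` to the coordinates of blocks outside `T`. -/
def restrictOut {n b : ℕ} (T : Finset (Fin n)) (v : (Fin n × Fin b) → F2) :
    ({i : Fin n // i ∉ T} × Fin b) → F2 :=
  fun p => v (p.1.1, p.2)

/-- `T` is a deviolator for `A` if `{ℓ[∖T] : ℓ ∈ L(A)}` is safe. -/
def IsDeviolator {n b : ℕ} (A : AffineSubspace F2 ((Fin n × Fin b) → F2))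
    (T : Finset (Fin n)) : Prop :=
  IsSafeSet (restrictOut T '' annih A)

/-- A closure of `A` is a deviolator of minimum cardinality. -/
def IsClosure {n b : ℕ} (A : AffineSubspace F2 ((Fin n × Fin b) → F2))
    (T : Finset (Fin n)) : Prop :=
  IsDeviolator A T ∧ ∀ T', IsDeviolator A T' → T.card ≤ T'.card

/-- `C_y`: the set of points agreeing with `y` on all coordinates of blocks in `T`. -/
def cube {n b : ℕ} (T : Finset (Fin n)) (y : ({i : Fin n // i ∈ T} × Fin b) → F2) :
    Set ((Fin n × Fin b) → F2) :=
  {x | ∀ (i : Fin n) (hi : i ∈ T) (j : Fin b), x (i, j) = y (⟨i, hi⟩, j)}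

/-- The point of the lifted space equal to `y` on the blocks of `T` and to `x` elsewhere. -/
def glue {n b : ℕ} (T : Finset (Fin n)) (y : ({i : Fin n // i ∈ T} × Fin b) → F2)
    (x : ({i : Fin n // i ∉ T} × Fin b) → F2) : (Fin n × Fin b) → F2 :=
  fun p => if h : p.1 ∈ T then y (⟨p.1, h⟩, p.2) else x (⟨p.1, h⟩, p.2)


open Finset

def ee (a : F2) : ℝ := (-1 : ℝ) ^ a.val

lemma F2cases : ∀ a : F2, a = 0 ∨ a = 1 := by decide

lemma F2val0 : (0 : F2).val = 0 := rfl
lemma F2val1 : (1 : F2).val = 1 := rfl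
lemma F2add11 : (1 + 1 : F2) = 0 := rfl

lemma ee_zero : ee 0 = 1 := by rw [ee, F2val0, pow_zero]
lemma ee_one : ee 1 = -1 := by rw [ee, F2val1, pow_one]

lemma ee_add (a c : F2) : ee (a + c) = ee a * ee c := by
  rcases F2cases a with h|h <;> rcases F2cases c with h'|h' <;> subst h h' <;>
    simp [ee_zero, ee_one, F2add11]

lemma ee_abs (a : F2) : |ee a| = 1 := by
  rcases F2cases a with h|h <;> subst h <;> simp [ee_zero, ee_one]

lemma ee_sum {α : Type*} (t : Finset α) (f : α → F2) :
    ee (∑ i ∈ t, f i) = ∏ i ∈ t, ee (f i) := by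
  classical
  induction t using Finset.cons_induction with
  | empty => simp [ee_zero]
  | cons a t ha ih =>
      rw [Finset.sum_cons, Finset.prod_cons, ee_add, ih]

lemma ee_natsum {α : Type*} (t : Finset α) (f : α → F2) :
    (-1 : ℝ) ^ (∑ i ∈ t, (f i).val) = ee (∑ i ∈ t, f i) := by
  classical
  induction t using Finset.cons_induction with
  | empty => simp [ee_zero]
  | cons a t ha ih =>
      rw [Finset.sum_cons, Finset.sum_cons, pow_add, ee_add, ih]; rfl

def ip {J : Type*} [Fintype J] (l x : J → F2) : F2 := ∑ p, l p * x p

lemma add_self_F2 {J : Type*} (v : J → F2) : v + v = 0 := by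
  funext p
  show v p + v p = 0
  rcases F2cases (v p) with h|h <;> rw [h] <;> rfl

lemma add_eq_zero_iff_F2 (a c : F2) : a + c = 0 ↔ a = c := by
  revert a c; decide

lemma fun_add_eq_zero_iff {J : Type*} (u v : J → F2) : u + v = 0 ↔ u = v := by
  constructor
  · intro h; funext j; exact (add_eq_zero_iff_F2 _ _).1 (congrFun h j)
  · intro h; subst h; exact add_self_F2 u

lemma ip_comm {J : Type*} [Fintype J] (l x : J → F2) : ip l x = ip x l := by
  simp [ip, mul_comm]

lemma ip_add_right {J : Type*} [Fintype J] (l x y : J → F2) :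
    ip l (x + y) = ip l x + ip l y := by
  simp [ip, mul_add, Finset.sum_add_distrib]

lemma ip_add_left {J : Type*} [Fintype J] (l m x : J → F2) :
    ip (l + m) x = ip l x + ip m x := by
  simp [ip, add_mul, Finset.sum_add_distrib]

lemma ip_zero_left {J : Type*} [Fintype J] (x : J → F2) : ip 0 x = 0 := by simp [ip]

lemma ip_smul_left {J : Type*} [Fintype J] (c : F2) (l x : J → F2) :
    ip (c • l) x = c * ip l x := by
  simp [ip, Finset.mul_sum, mul_assoc]

/-- flip lemma -/
lemma sum_ee_flip {J : Type*} [Fintype J] [DecidableEq J] (t : Finset (J → F2))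
    (l w0 : J → F2) (hw : ip l w0 = 1) (ht : ∀ x, x ∈ t ↔ x + w0 ∈ t) :
    ∑ x ∈ t, ee (ip l x) = 0 := by
  have key : ∑ x ∈ t, ee (ip l (x + w0)) = ∑ x ∈ t, ee (ip l x) := by
    exact Finset.sum_equiv (Equiv.addRight w0) (fun x => by simpa using (ht x)) (fun x hx => rfl)
  have key : ∑ x ∈ t, ee (ip l x) = ∑ x ∈ t, ee (ip l (x + w0)) := key.symm
  have : ∑ x ∈ t, ee (ip l (x + w0)) = - ∑ x ∈ t, ee (ip l x) := by
    rw [← Finset.sum_neg_distrib]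
    refine Finset.sum_congr rfl fun x _ => ?_
    rw [ip_add_right, ee_add, hw, ee_one, mul_neg_one]
  linarith [key, this]

/-- full-space orthogonality -/
lemma sum_ee_all {J : Type*} [Fintype J] [DecidableEq J] (l : J → F2) :
    ∑ x : J → F2, ee (ip l x) = if l = 0 then (2 : ℝ) ^ (Fintype.card J) else 0 := by
  by_cases h : l = 0
  · subst h
    simp only [ip_zero_left, ee_zero, Finset.sum_const, Finset.card_univ, nsmul_eq_mul,
      mul_one, if_pos]
    rw [Fintype.card_fun]
    have : Fintype.card F2 = 2 := rfl
    rw [this]; push_cast; ring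
  · rw [if_neg h]
    obtain ⟨p0, hp0⟩ : ∃ p0, l p0 ≠ 0 := by
      by_contra hc; push_neg at hc; exact h (funext hc)
    have hl1 : l p0 = 1 := (F2cases (l p0)).resolve_left hp0
    refine sum_ee_flip _ l (fun q => if q = p0 then 1 else 0) ?_ (fun x => by simp)
    rw [ip]
    rw [Finset.sum_eq_single p0]
    · simp [hl1]
    · intro q _ hq; simp [hq]
    · simp

/-- sum over all subsets -/
lemma sum_subsets_ee {J : Type*} [Fintype J] [DecidableEq J] (v : J → F2) :
    ∑ S : Finset J, ee (∑ j ∈ S, v j) = if v = 0 then (2 : ℝ) ^ (Fintype.card J) else 0 := by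
  have h1 : ∀ S : Finset J, ee (∑ j ∈ S, v j) = ∏ j ∈ S, ee (v j) := fun S => ee_sum S v
  simp only [h1]
  have h2 : ∑ S : Finset J, ∏ j ∈ S, ee (v j) = ∏ j : J, (ee (v j) + 1) := by
    rw [Finset.prod_add]
    rw [← Finset.powerset_univ]
    refine (Finset.sum_congr rfl fun S _ => ?_).symm
    simp
  rw [h2]
  by_cases h : v = 0
  · subst h; rw [if_pos rfl]; simp [ee_zero, Finset.prod_const]; norm_num
  · rw [if_neg h]
    obtain ⟨p0, hp0⟩ : ∃ p0, v p0 ≠ 0 := by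
      by_contra hc; push_neg at hc; exact h (funext hc)
    have hl1 : v p0 = 1 := (F2cases (v p0)).resolve_left hp0
    exact Finset.prod_eq_zero (Finset.mem_univ p0) (by rw [hl1, ee_one]; ring)

lemma fourier_inversion {J : Type*} [Fintype J] [DecidableEq J]
    (g : (J → F2) → F2) (y : J → F2) :
    ee (g y) = ∑ S : Finset J, hatFC g S * ee (∑ j ∈ S, y j) := by
  have step1 : ∀ S : Finset J, hatFC g S * ee (∑ j ∈ S, y j)
      = ((2 : ℝ) ^ (Fintype.card J))⁻¹ *
        ∑ x : J → F2, ee (g x) * ee (∑ j ∈ S, (x j + y j)) := by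
    intro S
    rw [hatFC, mul_comm _ (ee _), ← mul_assoc, mul_comm (ee _), mul_assoc]
    congr 1
    rw [Finset.mul_sum]
    refine Finset.sum_congr rfl fun x _ => ?_
    rw [pow_add, ee_natsum]
    have : (∑ j ∈ S, (x j + y j)) = (∑ j ∈ S, x j) + ∑ j ∈ S, y j := by
      rw [Finset.sum_add_distrib]
    rw [this, ee_add]
    simp only [ee]; ring
  simp only [step1]
  rw [← Finset.mul_sum, Finset.sum_comm]
  have step2 : ∀ x : J → F2,
      (∑ S : Finset J, ee (g x) * ee (∑ j ∈ S, (x j + y j)))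
      = ee (g x) * (if (fun j => x j + y j) = 0 then (2:ℝ) ^ (Fintype.card J) else 0) := by
    intro x
    rw [← Finset.mul_sum, sum_subsets_ee (fun j => x j + y j)]
  simp only [step2]
  have hiff : ∀ x : J → F2, ((fun j => x j + y j) = 0) ↔ x = y := by
    intro x
    constructor
    · intro h; funext j
      exact (add_eq_zero_iff_F2 _ _).1 (congrFun h j)
    · intro h; subst h; funext j; exact (add_eq_zero_iff_F2 _ _).2 rfl
  rw [Finset.sum_eq_single y]
  · rw [if_pos ((hiff y).2 rfl)]
    rw [mul_comm (ee (g y)), ← mul_assoc, inv_mul_cancel₀ (by positivity), one_mul]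
  · intro x _ hx
    rw [if_neg (fun h => hx ((hiff x).1 h)), mul_zero]
  · intro h; exact absurd (Finset.mem_univ y) h

open scoped Classical

section Main
variable {n b : ℕ}

/-- coefficient for one block -/
def cf (g : (Fin b → F2) → F2) (a : F2) (S : Finset (Fin b)) : ℝ :=
  if a = 1 then hatFC g S else if S = ∅ then 1 else 0

def coeff (g : (Fin b → F2) → F2) (s : Fin n → F2) (S : Fin n → Finset (Fin b)) : ℝ :=
  ∏ i, cf g (s i) (S i)

/-- the linear form attached to a tuple of subsets -/
def lv {n b : ℕ} (S : Fin n → Finset (Fin b)) : (Fin n × Fin b) → F2 :=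
  fun p => if p.2 ∈ S p.1 then 1 else 0

lemma ip_lv (S : Fin n → Finset (Fin b)) (x : (Fin n × Fin b) → F2) :
    ip (lv S) x = ∑ i, ∑ j ∈ S i, x (i, j) := by
  rw [ip, Fintype.sum_prod_type]
  refine Finset.sum_congr rfl fun i _ => ?_
  have h : ∀ y, lv S (i, y) * x (i, y) = if y ∈ S i then x (i, y) else 0 := by
    intro y; by_cases h : y ∈ S i <;> simp [lv, h]
  simp only [h]
  rw [Finset.sum_ite_mem, Finset.univ_inter]

lemma factor_expand (g : (Fin b → F2) → F2) (s : Fin n → F2) (x : (Fin n × Fin b) → F2)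
    (i : Fin n) :
    ee (s i * g (blk x i)) = ∑ S : Finset (Fin b), cf g (s i) S * ee (∑ j ∈ S, x (i, j)) := by
  rcases F2cases (s i) with h|h <;> rw [h]
  · rw [zero_mul, ee_zero]
    rw [Finset.sum_eq_single ∅]
    · simp [cf, ee_zero, show ¬(0:F2) = 1 from by decide]
    · intro S _ hS
      simp [cf, hS, show ¬(0:F2) = 1 from by decide]
    · intro h; exact absurd (Finset.mem_univ _) h
  · rw [one_mul]
    have := fourier_inversion g (blk x i)
    rw [this]
    refine Finset.sum_congr rfl fun S _ => ?_
    rw [cf, if_pos rfl]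
    rfl

lemma expand (g : (Fin b → F2) → F2) (s : Fin n → F2) (x : (Fin n × Fin b) → F2) :
    ee (ip s (liftG g x)) = ∑ S : Fin n → Finset (Fin b), coeff g s S * ee (ip (lv S) x) := by
  have h1 : ip s (liftG g x) = ∑ i, s i * g (blk x i) := rfl
  rw [h1, ee_sum]
  have h2 : ∀ i ∈ Finset.univ, ee (s i * g (blk x i))
      = ∑ S ∈ (Finset.univ : Finset (Finset (Fin b))), cf g (s i) S * ee (∑ j ∈ S, x (i, j)) :=
    fun i _ => factor_expand g s x i
  rw [Finset.prod_congr rfl h2, Finset.prod_univ_sum]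
  rw [Fintype.piFinset_univ]
  refine Finset.sum_congr rfl fun S _ => ?_
  rw [Finset.prod_mul_distrib, coeff, ip_lv, ee_sum]

def Zmod (A : AffineSubspace F2 ((Fin n × Fin b) → F2)) (s : Fin n → F2) :
    Submodule F2 ((Fin n × Fin b) → F2) where
  carrier := {l | (∀ w ∈ A.direction, ip l w = 0) ∧ ∀ p : Fin n × Fin b, s p.1 ≠ 1 → l p = 0}
  add_mem' := by
    intro a c ha hc
    exact ⟨fun w hw => by rw [ip_add_left, ha.1 w hw, hc.1 w hw, add_zero],
     fun p hp => by show a p + c p = 0; rw [ha.2 p hp, hc.2 p hp, add_zero]⟩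
  zero_mem' := ⟨fun w hw => ip_zero_left w, fun p hp => rfl⟩
  smul_mem' := by
    intro c l hl
    exact ⟨fun w hw => by rw [ip_smul_left, hl.1 w hw, mul_zero],
     fun p hp => by show c * l p = 0; rw [hl.2 p hp, mul_zero]⟩

lemma finrank_Z_le (A : AffineSubspace F2 ((Fin n × Fin b) → F2))
    (hAsafe : IsSafeSet (annih A)) (s : Fin n → F2) :
    Module.finrank F2 (Zmod A s) ≤ (Finset.univ.filter (fun i => s i = 1)).card := by
  classical
  set Z := Zmod A s
  set m := Module.finrank F2 Z with hm
  let B : Module.Basis (Fin m) F2 Z := Module.finBasis F2 Z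
  let w : Fin m → ((Fin n × Fin b) → F2) := fun t => (B t : (Fin n × Fin b) → F2)
  have hli : LinearIndependent F2 w :=
    B.linearIndependent.map' Z.subtype (Submodule.ker_subtype Z)
  have hmem : ∀ t, w t ∈ Submodule.span F2 (annih A) := by
    intro t
    refine Submodule.subset_span ?_
    exact (B t).2.1
  have hsafe := hAsafe m w hmem hli
  refine hsafe.trans ?_
  have hsub : ({i : Fin n | ∃ t j, w t (i, j) ≠ 0} : Set (Fin n))
      ⊆ ↑(Finset.univ.filter (fun i => s i = 1)) := by
    intro i hi
    obtain ⟨t, j, hj⟩ := hi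
    simp only [Finset.coe_filter, Set.mem_setOf_eq, Finset.mem_univ, true_and]
    by_contra hs
    exact hj ((B t).2.2 (i, j) hs)
  calc ({i : Fin n | ∃ t j, w t (i, j) ≠ 0} : Set (Fin n)).ncard
      ≤ (↑(Finset.univ.filter (fun i => s i = 1)) : Set (Fin n)).ncard :=
        Set.ncard_le_ncard hsub (Set.toFinite _)
    _ = (Finset.univ.filter (fun i => s i = 1)).card := Set.ncard_coe_finset _

lemma card_Z_le (A : AffineSubspace F2 ((Fin n × Fin b) → F2))
    (hAsafe : IsSafeSet (annih A)) (s : Fin n → F2) :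
    Fintype.card (Zmod A s) ≤ 2 ^ (Finset.univ.filter (fun i => s i = 1)).card := by
  have h1 : Fintype.card (Zmod A s) = 2 ^ Module.finrank F2 (Zmod A s) := by
    have := Module.card_eq_pow_finrank (K := F2) (V := Zmod A s)
    rwa [show Fintype.card F2 = 2 from rfl] at this
  rw [h1]
  exact Nat.pow_le_pow_right (by norm_num) (finrank_Z_le A hAsafe s)

lemma good_card_le (A : AffineSubspace F2 ((Fin n × Fin b) → F2))
    (hAsafe : IsSafeSet (annih A)) (s : Fin n → F2) :
    (Finset.univ.filter (fun S : Fin n → Finset (Fin b) =>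
        (∀ i, s i ≠ 1 → S i = ∅) ∧ ∀ w ∈ A.direction, ip (lv S) w = 0)).card
      ≤ 2 ^ (Finset.univ.filter (fun i => s i = 1)).card := by
  classical
  set Gs := Finset.univ.filter (fun S : Fin n → Finset (Fin b) =>
        (∀ i, s i ≠ 1 → S i = ∅) ∧ ∀ w ∈ A.direction, ip (lv S) w = 0) with hGs
  have hinj : Set.InjOn (lv (n := n) (b := b)) ↑Gs := by
    intro S _ S' _ h
    funext i
    ext j
    have := congrFun h (i, j)
    simp only [lv] at this
    by_cases h1 : j ∈ S i <;> by_cases h2 : j ∈ S' i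
    · simp [h1, h2]
    · rw [if_pos h1, if_neg h2] at this; exact absurd this one_ne_zero
    · rw [if_neg h1, if_pos h2] at this; exact absurd this.symm one_ne_zero
    · simp [h1, h2]
  have himg : Gs.image lv ⊆ Finset.univ.filter (fun l => l ∈ Zmod A s) := by
    intro l hl
    obtain ⟨S, hS, rfl⟩ := Finset.mem_image.1 hl
    rw [Finset.mem_filter] at hS ⊢
    refine ⟨Finset.mem_univ _, ?_, ?_⟩
    · exact hS.2.2
    · intro p hp
      have : S p.1 = ∅ := hS.2.1 p.1 hp
      simp [lv, this]
  calc Gs.card = (Gs.image lv).card := (Finset.card_image_of_injOn hinj).symm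
    _ ≤ (Finset.univ.filter (fun l => l ∈ Zmod A s)).card := Finset.card_le_card himg
    _ = Fintype.card (Zmod A s) := (Fintype.card_subtype _).symm
    _ ≤ 2 ^ (Finset.univ.filter (fun i => s i = 1)).card := card_Z_le A hAsafe s

end Main


set_option maxHeartbeats 1000000

/-- the fraction of points of a safe affine subspace mapped to any
target `z` is close to `2^{-n}` (Corollary `equidistribution`). -/
theorem stmt1 {n b : ℕ} (hn : 0 < n) (hb : 0 < b)
    (g : (Fin b → F2) → F2) (δ : ℝ) (hδ0 : 0 ≤ δ)
    (hδ : ∀ S : Finset (Fin b), |hatFC g S| ≤ δ)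
    (E : ℝ) (hE : E = (1 + 2 * δ) ^ n - 1)
    (A : AffineSubspace F2 ((Fin n × Fin b) → F2))
    (hAne : (A : Set ((Fin n × Fin b) → F2)).Nonempty)
    (hAsafe : IsSafeAffine A)
    (z : Fin n → F2) :
    abs (((((A : Set ((Fin n × Fin b) → F2)) ∩ {x | liftG g x = z}).ncard : ℝ)
          / ((A : Set ((Fin n × Fin b) → F2)).ncard : ℝ))
        - ((2 : ℝ) ^ n)⁻¹)
      ≤ E * ((2 : ℝ) ^ n)⁻¹ := by
  classical
  set Af : Finset ((Fin n × Fin b) → F2) := Finset.univ.filter (· ∈ A) with hAf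
  set Nf : Finset ((Fin n × Fin b) → F2) := Af.filter (fun x => liftG g x = z) with hNf
  have hA_set : (A : Set ((Fin n × Fin b) → F2)) = ↑Af := by
    ext x; simp [hAf]
  have hN_set : ((A : Set ((Fin n × Fin b) → F2)) ∩ {x | liftG g x = z}) = ↑Nf := by
    ext x; simp [hNf, hAf, Finset.mem_filter]
  rw [hN_set, hA_set, Set.ncard_coe_finset, Set.ncard_coe_finset]
  obtain ⟨x0, hx0⟩ := hAne
  have hx0' : x0 ∈ Af := by
    rw [hAf, Finset.mem_filter]
    exact ⟨Finset.mem_univ _, hx0⟩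
  have hD0 : 0 < Af.card := Finset.card_pos.2 ⟨x0, hx0'⟩
  set D : ℝ := (Af.card : ℝ) with hD
  have hDR : (0:ℝ) < D := by rw [hD]; exact_mod_cast hD0
  set P2 : ℝ := ((2:ℝ) ^ n)⁻¹ with hP2
  have hP2pos : 0 < P2 := by rw [hP2]; positivity
  -- Af is closed under translation by any direction vector
  have hAclosed : ∀ w0 ∈ A.direction, ∀ x, x ∈ Af ↔ x + w0 ∈ Af := by
    intro w0 hw0 x
    have fwd : ∀ y, y ∈ A → y + w0 ∈ A := by
      intro y hy
      have h := AffineSubspace.vadd_mem_of_mem_direction hw0 hy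
      rwa [show w0 +ᵥ y = y + w0 from add_comm w0 y] at h
    simp only [hAf, Finset.mem_filter, Finset.mem_univ, true_and]
    constructor
    · exact fun hx => fwd x hx
    · intro hx
      have h := fwd _ hx
      rwa [add_assoc, add_self_F2, add_zero] at h
  -- main identity
  have main : ((Nf.card : ℝ)) = P2 * ∑ s : Fin n → F2,
      (ee (ip s z) * ∑ S : Fin n → Finset (Fin b),
        coeff g s S * ∑ x ∈ Af, ee (ip (lv S) x)) := by
    have h1 : ((Nf.card : ℝ)) = ∑ x ∈ Af, (if liftG g x = z then (1:ℝ) else 0) := by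
      rw [hNf, ← Finset.sum_boole]
    have h2 : ∀ x : (Fin n × Fin b) → F2, (if liftG g x = z then (1:ℝ) else 0)
        = P2 * ∑ s : Fin n → F2, ee (ip s z) * ee (ip s (liftG g x)) := by
      intro x
      have e1 : ∀ s : Fin n → F2, ee (ip (liftG g x + z) s)
          = ee (ip s z) * ee (ip s (liftG g x)) := by
        intro s
        rw [ip_comm, ip_add_right, ee_add, mul_comm]
      have e2 := sum_ee_all (liftG g x + z)
      rw [Fintype.card_fin] at e2
      simp only [fun_add_eq_zero_iff] at e2
      calc (if liftG g x = z then (1:ℝ) else 0)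
          = P2 * (if liftG g x = z then (2:ℝ)^n else 0) := by
            by_cases h : liftG g x = z
            · rw [if_pos h, if_pos h, hP2, inv_mul_cancel₀ (by positivity)]
            · rw [if_neg h, if_neg h, mul_zero]
        _ = P2 * ∑ s : Fin n → F2, ee (ip (liftG g x + z) s) := by rw [e2]
        _ = P2 * ∑ s : Fin n → F2, ee (ip s z) * ee (ip s (liftG g x)) := by
            rw [Finset.sum_congr rfl fun s _ => e1 s]
    rw [h1]
    rw [Finset.sum_congr rfl fun x _ => h2 x, ← Finset.mul_sum]
    congr 1
    rw [Finset.sum_comm]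
    refine Finset.sum_congr rfl fun s _ => ?_
    rw [← Finset.mul_sum]
    congr 1
    rw [Finset.sum_congr rfl fun x (_ : x ∈ Af) => expand g s x, Finset.sum_comm]
    exact Finset.sum_congr rfl fun S _ => (Finset.mul_sum _ _ _).symm
  -- split off s = 0
  have hzero : (ee (ip (0 : Fin n → F2) z) * ∑ S : Fin n → Finset (Fin b),
      coeff g (0 : Fin n → F2) S * ∑ x ∈ Af, ee (ip (lv S) x)) = D := by
    rw [ip_zero_left, ee_zero, one_mul]
    have hco : ∀ S : Fin n → Finset (Fin b), coeff g (0 : Fin n → F2) S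
        = if S = (fun _ => ∅) then 1 else 0 := by
      intro S
      by_cases h : S = fun _ => ∅
      · subst h
        rw [if_pos rfl, coeff]
        refine Finset.prod_eq_one fun i _ => ?_
        simp [cf, show ¬(0:F2) = 1 from by decide]
      · rw [if_neg h, coeff]
        obtain ⟨i, hi⟩ : ∃ i, S i ≠ ∅ := by
          by_contra hc; push_neg at hc; exact h (funext hc)
        exact Finset.prod_eq_zero (Finset.mem_univ i)
          (by simp [cf, hi, show ¬(0:F2) = 1 from by decide])
    rw [Finset.sum_congr rfl fun S _ => by rw [hco S]]
    rw [Finset.sum_eq_single (fun _ => (∅ : Finset (Fin b)))]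
    · have hlv : lv (fun _ : Fin n => (∅ : Finset (Fin b))) = 0 := by
        funext p; simp [lv]
      rw [if_pos rfl, one_mul, hlv]
      simp only [ip_zero_left, ee_zero]
      rw [Finset.sum_const, nsmul_eq_mul, mul_one, hD]
    · intro S _ hS
      rw [if_neg hS, zero_mul]
    · intro h; exact absurd (Finset.mem_univ _) h
  -- per-s bound
  have hFbound : ∀ s : Fin n → F2,
      |ee (ip s z) * ∑ S : Fin n → Finset (Fin b),
        coeff g s S * ∑ x ∈ Af, ee (ip (lv S) x)|
      ≤ (2*δ) ^ (Finset.univ.filter (fun i => s i = 1)).card * D := by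
    intro s
    set k := (Finset.univ.filter (fun i => s i = 1)).card with hk
    have hT_abs : ∀ S : Fin n → Finset (Fin b), |∑ x ∈ Af, ee (ip (lv S) x)| ≤ D := by
      intro S
      calc |∑ x ∈ Af, ee (ip (lv S) x)| ≤ ∑ x ∈ Af, |ee (ip (lv S) x)| :=
            Finset.abs_sum_le_sum_abs _ _
        _ = ∑ x ∈ Af, 1 := Finset.sum_congr rfl fun x _ => ee_abs _
        _ = D := by rw [Finset.sum_const, nsmul_eq_mul, mul_one, hD]
    have hterm : ∀ S : Fin n → Finset (Fin b),
        |coeff g s S * ∑ x ∈ Af, ee (ip (lv S) x)|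
        ≤ (if ((∀ i, s i ≠ 1 → S i = ∅) ∧ ∀ w ∈ A.direction, ip (lv S) w = 0)
            then δ ^ k * D else 0) := by
      intro S
      by_cases hP : (∀ i, s i ≠ 1 → S i = ∅) ∧ ∀ w ∈ A.direction, ip (lv S) w = 0
      · rw [if_pos hP, abs_mul]
        refine mul_le_mul ?_ (hT_abs S) (abs_nonneg _) (by positivity)
        rw [coeff, Finset.abs_prod,
          ← Finset.prod_filter_mul_prod_filter_not Finset.univ (fun i => s i = 1)]
        have h2 : ∏ i ∈ Finset.univ.filter (fun i => ¬ s i = 1), |cf g (s i) (S i)| = 1 := by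
          refine Finset.prod_eq_one fun i hi => ?_
          rw [Finset.mem_filter] at hi
          rw [cf, if_neg hi.2, if_pos (hP.1 i hi.2), abs_one]
        rw [h2, mul_one]
        calc ∏ i ∈ Finset.univ.filter (fun i => s i = 1), |cf g (s i) (S i)|
            ≤ ∏ _i ∈ Finset.univ.filter (fun i => s i = 1), δ := by
              refine Finset.prod_le_prod (fun i _ => abs_nonneg _) fun i hi => ?_
              rw [Finset.mem_filter] at hi
              rw [cf, if_pos hi.2]
              exact hδ (S i)
          _ = δ ^ k := by rw [Finset.prod_const, hk]
      · rw [if_neg hP]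
        by_cases hP1 : ∀ i, s i ≠ 1 → S i = ∅
        · have hP2 : ¬ ∀ w ∈ A.direction, ip (lv S) w = 0 := fun h => hP ⟨hP1, h⟩
          push_neg at hP2
          obtain ⟨w0, hw0, hwne⟩ := hP2
          have hw1 : ip (lv S) w0 = 1 := (F2cases _).resolve_left hwne
          have hT0 : ∑ x ∈ Af, ee (ip (lv S) x) = 0 :=
            sum_ee_flip Af (lv S) w0 hw1 (hAclosed w0 hw0)
          rw [hT0, mul_zero, abs_zero]
        · push_neg at hP1
          obtain ⟨i, hi1, hi2⟩ := hP1
          have hc0 : coeff g s S = 0 :=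
            Finset.prod_eq_zero (Finset.mem_univ i) (by rw [cf, if_neg hi1, if_neg hi2.ne_empty])
          rw [hc0, zero_mul, abs_zero]
    calc |ee (ip s z) * ∑ S : Fin n → Finset (Fin b),
          coeff g s S * ∑ x ∈ Af, ee (ip (lv S) x)|
        = |∑ S : Fin n → Finset (Fin b), coeff g s S * ∑ x ∈ Af, ee (ip (lv S) x)| := by
          rw [abs_mul, ee_abs, one_mul]
      _ ≤ ∑ S : Fin n → Finset (Fin b), |coeff g s S * ∑ x ∈ Af, ee (ip (lv S) x)| :=
          Finset.abs_sum_le_sum_abs _ _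
      _ ≤ ∑ S : Fin n → Finset (Fin b),
            (if ((∀ i, s i ≠ 1 → S i = ∅) ∧ ∀ w ∈ A.direction, ip (lv S) w = 0)
              then δ ^ k * D else 0) :=
          Finset.sum_le_sum fun S _ => hterm S
      _ = ((Finset.univ.filter (fun S : Fin n → Finset (Fin b) =>
            (∀ i, s i ≠ 1 → S i = ∅) ∧ ∀ w ∈ A.direction, ip (lv S) w = 0)).card : ℝ)
            * (δ ^ k * D) := by
          rw [Finset.sum_ite, Finset.sum_const_zero, add_zero, Finset.sum_const, nsmul_eq_mul]
      _ ≤ ((2:ℝ) ^ k) * (δ ^ k * D) := by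
          refine mul_le_mul_of_nonneg_right ?_ (by positivity)
          have hcard := good_card_le A hAsafe s
          calc ((Finset.univ.filter (fun S : Fin n → Finset (Fin b) =>
                (∀ i, s i ≠ 1 → S i = ∅) ∧ ∀ w ∈ A.direction, ip (lv S) w = 0)).card : ℝ)
              ≤ ((2 ^ k : ℕ) : ℝ) := by exact_mod_cast hcard
            _ = (2:ℝ) ^ k := by push_cast; ring
      _ = (2*δ) ^ k * D := by rw [mul_pow]; ring
  -- the sum of the bounds
  have hEs : ∑ s ∈ Finset.univ.erase (0 : Fin n → F2),
      (2*δ) ^ (Finset.univ.filter (fun i => s i = 1)).card = E := by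
    have htot : ∑ s : Fin n → F2,
        (2*δ) ^ (Finset.univ.filter (fun i => s i = 1)).card = (1 + 2*δ)^n := by
      have h1 : ∀ s : Fin n → F2, (2*δ) ^ (Finset.univ.filter (fun i => s i = 1)).card
          = ∏ i : Fin n, (if s i = 1 then 2*δ else 1) := by
        intro s
        rw [← Finset.prod_filter_mul_prod_filter_not Finset.univ (fun i => s i = 1)]
        have ha : ∏ i ∈ Finset.univ.filter (fun i => s i = 1), (if s i = 1 then 2*δ else 1)
            = (2*δ) ^ (Finset.univ.filter (fun i => s i = 1)).card := by
          rw [Finset.prod_congr rfl fun i hi => if_pos (Finset.mem_filter.1 hi).2,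
            Finset.prod_const]
        have hb2 : ∏ i ∈ Finset.univ.filter (fun i => ¬ s i = 1),
            (if s i = 1 then 2*δ else 1) = 1 := by
          rw [Finset.prod_congr rfl fun i hi => if_neg (Finset.mem_filter.1 hi).2,
            Finset.prod_const, one_pow]
        rw [ha, hb2, mul_one]
      rw [Finset.sum_congr rfl fun s _ => h1 s]
      have h2 : ∏ i : Fin n, (∑ a : F2, (if a = 1 then 2*δ else 1))
          = ∑ s ∈ Fintype.piFinset (fun _ : Fin n => (Finset.univ : Finset F2)),
              ∏ i, (if s i = 1 then 2*δ else 1) := Finset.prod_univ_sum _ _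
      rw [Fintype.piFinset_univ] at h2
      rw [← h2]
      have h3 : ∑ a : F2, (if a = 1 then 2*δ else 1) = 1 + 2*δ := by
        have hu : (Finset.univ : Finset F2) = {0, 1} := by decide
        rw [hu, Finset.sum_insert (by decide), Finset.sum_singleton,
          if_neg (show ¬(0:F2) = 1 from by decide), if_pos rfl]
      rw [h3, Finset.prod_const, Finset.card_univ, Fintype.card_fin]
    rw [← Finset.add_sum_erase _ _ (Finset.mem_univ (0 : Fin n → F2))] at htot
    have h0 : (Finset.univ.filter (fun i => (0 : Fin n → F2) i = 1)).card = 0 := by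
      rw [Finset.card_eq_zero, Finset.filter_eq_empty_iff]
      intro i _
      exact show ¬(0:F2) = 1 from by decide
    rw [h0, pow_zero] at htot
    rw [hE]; linarith
  -- finish
  rw [← Finset.add_sum_erase _ _ (Finset.mem_univ (0 : Fin n → F2)), hzero] at main
  set R := ∑ s ∈ Finset.univ.erase (0 : Fin n → F2),
      (ee (ip s z) * ∑ S : Fin n → Finset (Fin b),
        coeff g s S * ∑ x ∈ Af, ee (ip (lv S) x)) with hR
  have hRle : |R| ≤ E * D := by
    calc |R| ≤ ∑ s ∈ Finset.univ.erase (0 : Fin n → F2),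
          |ee (ip s z) * ∑ S : Fin n → Finset (Fin b),
            coeff g s S * ∑ x ∈ Af, ee (ip (lv S) x)| := Finset.abs_sum_le_sum_abs _ _
      _ ≤ ∑ s ∈ Finset.univ.erase (0 : Fin n → F2),
          (2*δ) ^ (Finset.univ.filter (fun i => s i = 1)).card * D :=
          Finset.sum_le_sum fun s _ => hFbound s
      _ = (∑ s ∈ Finset.univ.erase (0 : Fin n → F2),
          (2*δ) ^ (Finset.univ.filter (fun i => s i = 1)).card) * D := by
          rw [← Finset.sum_mul]
      _ = E * D := by rw [hEs]
  have hfrac : (Nf.card : ℝ) / D - P2 = P2 * (R / D) := by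
    rw [main, mul_add, add_div, mul_div_assoc, mul_div_assoc,
      div_self (ne_of_gt hDR), mul_one]
    ring
  rw [hfrac, abs_mul, abs_of_pos hP2pos, abs_div, abs_of_pos hDR]
  have hdiv : |R| / D ≤ E := by
    rw [div_le_iff₀ hDR]; exact hRle
  calc P2 * (|R| / D) ≤ P2 * E := mul_le_mul_of_nonneg_left hdiv (le_of_lt hP2pos)
    _ = E * P2 := mul_comm _ _
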